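/- Let R be a regular ring of prime characteristic p admitting the I_e(−) operation, let u ∈ R, J an ideal with u·J ⊆ J^[p], and ν_e = 1+p+...+p^{e−1}. Then the sequence of ideals I_e(u^{ν_e}·J) is descending: I_{e+1}(u^{ν_{e+1}}·J) ⊆ I_e(u^{ν_e}·J) for all e ≥ 0. -/
import Mathlib


/-- The `q`-th Frobenius power of an ideal: the ideal generated by `q`-th powers of its
elements. -/
def fpow {R : Type*} [CommRing R] (q : ℕ) (J : Ideal R) : Ideal R :=
  Ideal.span ((fun a => a ^ q) '' (J : Set R))

/-- `ν_e = 1 + p + ... + p^{e-1}`. -/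
def nu (p e : ℕ) : ℕ := ∑ i ∈ Finset.range e, p ^ i

lemma fpow_mem {R : Type*} [CommRing R] (q : ℕ) {J : Ideal R} {x : R} (hx : x ∈ J) :
    x ^ q ∈ fpow q J :=
  Ideal.subset_span ⟨x, hx, rfl⟩

/-- In char `p`, a `p`-th power of an element of `fpow q L` lies in `fpow (p*q) L`. -/
lemma pow_mem_fpow_mul {R : Type*} [CommRing R] (p : ℕ) (hp : p.Prime) [CharP R p]
    (q : ℕ) (L : Ideal R) {a : R} (ha : a ∈ fpow q L) : a ^ p ∈ fpow (p * q) L := by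
  haveI : Fact p.Prime := ⟨hp⟩
  induction ha using Submodule.span_induction with
  | mem x hx =>
    obtain ⟨y, hy, rfl⟩ := hx
    have : (y ^ q) ^ p = y ^ (p * q) := by rw [← pow_mul, Nat.mul_comm]
    rw [this]
    exact fpow_mem _ hy
  | zero => simpa [zero_pow hp.ne_zero] using (Ideal.zero_mem _)
  | add x y _ _ hx hy =>
    rw [add_pow_char]
    exact Ideal.add_mem _ hx hy
  | smul r x _ hx =>
    simp only [smul_eq_mul, mul_pow]
    exact Ideal.mul_mem_left _ _ hx

/-- Multiplying an element of `fpow p J` by `m ^ p` lands in `fpow p (span{m} * J)`. -/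
lemma mul_pow_mem_fpow {R : Type*} [CommRing R] (p : ℕ) (m : R) (J : Ideal R) {z : R}
    (hz : z ∈ fpow p J) : m ^ p * z ∈ fpow p (Ideal.span {m} * J) := by
  induction hz using Submodule.span_induction with
  | mem x hx =>
    obtain ⟨y, hy, rfl⟩ := hx
    have : m ^ p * y ^ p = (m * y) ^ p := (mul_pow m y p).symm
    rw [this]
    exact fpow_mem _ (Ideal.mul_mem_mul (Ideal.mem_span_singleton_self m) hy)
  | zero => simpa using (Ideal.zero_mem _)
  | add x y _ _ hx hy =>
    rw [mul_add]
    exact Ideal.add_mem _ hx hy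
  | smul r x _ hx =>
    simp only [smul_eq_mul]
    rw [mul_left_comm]
    exact Ideal.mul_mem_left _ _ hx

lemma nu_succ (p e : ℕ) : nu p (e + 1) = 1 + p * nu p e := by
  unfold nu
  rw [Finset.sum_range_succ', Finset.mul_sum]
  simp [pow_succ, Nat.add_comm, Nat.mul_comm]

theorem stmt_7 {R : Type*} [CommRing R] (p : ℕ) (hp : p.Prime) [CharP R p]
    (Ie : ℕ → Ideal R → Ideal R)
    (hIe : ∀ (e : ℕ) (A : Ideal R), A ≤ fpow (p ^ e) (Ie e A))
    (hIemin : ∀ (e : ℕ) (A L : Ideal R), A ≤ fpow (p ^ e) L → Ie e A ≤ L)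
    (u : R) (J : Ideal R)
    (hu : ∀ x ∈ J, u * x ∈ fpow p J) :
    ∀ e : ℕ, Ie (e + 1) (Ideal.span {u ^ nu p (e + 1)} * J) ≤ Ie e (Ideal.span {u ^ nu p e} * J) := by
  intro e
  set m := u ^ nu p e with hm
  set T := Ie e (Ideal.span {m} * J) with hT
  apply hIemin
  -- show span{u^{ν_{e+1}}} * J ≤ fpow (p^{e+1}) T
  -- Step B: fpow p (span{m} * J) ≤ fpow (p^{e+1}) T
  have stepB : fpow p (Ideal.span {m} * J) ≤ fpow (p ^ (e + 1)) T := by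
    rw [fpow, Ideal.span_le]
    rintro _ ⟨w, hw, rfl⟩
    have hw' : w ∈ fpow (p ^ e) T := hIe e _ hw
    have := pow_mem_fpow_mul p hp (p ^ e) T hw'
    rwa [← pow_succ'] at this
  rw [Ideal.span_singleton_mul_le_iff]
  intro x hx
  have key : u ^ nu p (e + 1) * x = m ^ p * (u * x) := by
    rw [hm, ← pow_mul, nu_succ]; ring
  rw [key]
  exact stepB (mul_pow_mem_fpow p m J (hu x hx))
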